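/- Let w(z) := sech(πz/4) and let h : ℝ → ℂ be differentiable at every point with h ∈ L²(ℝ) and h' ∈ L²(ℝ). Then ∫_ℝ w(z)·[ h'(z) + (π/4)·tanh(πz/4)·h(z) + (π/4)·w(z)·∫_ℝ w'(s)·h(s) ds ] dz = 0; that is, ⟨w, D₀h⟩ = 0 for every h in H¹(ℝ). -/

import Mathlib

open Real MeasureTheory

/-- The weight `w(z) = sech(πz/4)`. -/
noncomputable def w (z : ℝ) : ℝ := 1 / Real.cosh (π * z / 4)

open Filter Topology
open scoped ENNReal

lemma w_pos (z : ℝ) : 0 < w z := by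
  unfold w; positivity

lemma hasDerivAt_inner (z : ℝ) : HasDerivAt (fun z : ℝ => π * z / 4) (π / 4) z := by
  simpa [mul_comm, mul_div_assoc] using ((hasDerivAt_id z).const_mul π).div_const 4

lemma hasDerivAt_w (z : ℝ) :
    HasDerivAt w (-(π / 4 * Real.tanh (π * z / 4)) * w z) z := by
  have h1 : HasDerivAt (fun z : ℝ => Real.cosh (π * z / 4))
      (Real.sinh (π * z / 4) * (π / 4)) z :=
    (Real.hasDerivAt_cosh _).comp z (hasDerivAt_inner z)
  have h2 := h1.inv (Real.cosh_pos (π * z / 4)).ne'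
  have : w = fun z => (Real.cosh (π * z / 4))⁻¹ := by
    funext z; simp [w]
  rw [this]
  refine h2.congr_deriv ?_
  rw [Real.tanh_eq_sinh_div_cosh]
  simp only [w]
  have hc := (Real.cosh_pos (π * z / 4)).ne'
  field_simp

lemma deriv_w (z : ℝ) : deriv w z = -(π / 4 * Real.tanh (π * z / 4)) * w z :=
  (hasDerivAt_w z).deriv

lemma abs_tanh_le (x : ℝ) : |Real.tanh x| ≤ 1 := by
  rw [Real.tanh_eq_sinh_div_cosh, abs_div, abs_of_pos (Real.cosh_pos x),
    div_le_one (Real.cosh_pos x), Real.abs_sinh]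
  exact (Real.sinh_lt_cosh |x|).le.trans (by rw [Real.cosh_abs])

lemma abs_deriv_w_le (z : ℝ) : |deriv w z| ≤ π / 4 * w z := by
  rw [deriv_w, abs_mul, abs_neg, abs_mul, abs_of_pos (w_pos z),
    abs_of_pos (by positivity : (0:ℝ) < π / 4)]
  calc π / 4 * |Real.tanh (π * z / 4)| * w z ≤ π / 4 * 1 * w z := by
        gcongr
        · exact (w_pos z).le
        · exact abs_tanh_le _
    _ = π / 4 * w z := by ring

lemma tanh_eq_aux (x : ℝ) :
    Real.tanh x = (1 - Real.exp (-(2 * x))) / (1 + Real.exp (-(2 * x))) := by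
  have ha : Real.exp (-(2 * x)) = Real.exp (-x) * Real.exp (-x) := by
    rw [← Real.exp_add]; ring_nf
  have hb : Real.exp x * Real.exp (-x) = 1 := by rw [← Real.exp_add]; simp
  rw [Real.tanh_eq_sinh_div_cosh, Real.sinh_eq, Real.cosh_eq, ha]
  rw [div_eq_div_iff (by positivity) (by positivity)]
  linear_combination (Real.exp (-x)) * hb

lemma tendsto_tanh_atTop : Tendsto Real.tanh atTop (𝓝 1) := by
  have he : Tendsto (fun x : ℝ => Real.exp (-(2 * x))) atTop (𝓝 0) := by
    apply Real.tendsto_exp_atBot.comp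
    have : Tendsto (fun x : ℝ => 2 * x) atTop atTop :=
      (tendsto_id (α := ℝ)).const_mul_atTop (by norm_num)
    exact tendsto_neg_atBot_iff.mpr this
  have : Tendsto (fun x : ℝ => (1 - Real.exp (-(2 * x))) / (1 + Real.exp (-(2 * x))))
      atTop (𝓝 ((1 - 0) / (1 + 0))) :=
    ((tendsto_const_nhds.sub he)).div (tendsto_const_nhds.add he) (by norm_num)
  have h1 := (this.congr (fun x => (tanh_eq_aux x).symm))
  norm_num at h1
  exact h1

noncomputable def G (z : ℝ) : ℝ := 4 / π * Real.tanh (π * z / 4)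

lemma hasDerivAt_G (z : ℝ) : HasDerivAt G (w z ^ 2) z := by
  have hc := (Real.cosh_pos (π * z / 4)).ne'
  have h1 : HasDerivAt (fun z : ℝ => Real.sinh (π * z / 4))
      (Real.cosh (π * z / 4) * (π / 4)) z :=
    (Real.hasDerivAt_sinh _).comp z (hasDerivAt_inner z)
  have h2 : HasDerivAt (fun z : ℝ => Real.cosh (π * z / 4))
      (Real.sinh (π * z / 4) * (π / 4)) z :=
    (Real.hasDerivAt_cosh _).comp z (hasDerivAt_inner z)
  have h3 := (h1.div h2 hc).const_mul (4 / π)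
  have hG : G = fun z => 4 / π * (Real.sinh (π * z / 4) / Real.cosh (π * z / 4)) := by
    funext z; rw [G, Real.tanh_eq_sinh_div_cosh]
  rw [hG]
  refine h3.congr_deriv ?_
  have hs := Real.cosh_sq_sub_sinh_sq (π * z / 4)
  have hπ := Real.pi_ne_zero
  rw [w, div_pow, one_pow, ← hs]
  field_simp

lemma tendsto_G_atTop : Tendsto G atTop (𝓝 (4 / π)) := by
  have hi : Tendsto (fun z : ℝ => π * z / 4) atTop atTop := by
    apply Tendsto.atTop_div_const (by norm_num)
    exact (tendsto_id (α := ℝ)).const_mul_atTop Real.pi_pos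
  have := (tendsto_tanh_atTop.comp hi).const_mul (4 / π)
  rw [mul_one] at this
  exact this

lemma G_neg (z : ℝ) : G (-z) = - G z := by
  simp [G, Real.tanh_neg, mul_neg, neg_div]

lemma tendsto_G_atBot : Tendsto G atBot (𝓝 (-(4 / π))) := by
  have h := tendsto_G_atTop.comp tendsto_neg_atBot_atTop
  have h2 : Tendsto (fun z : ℝ => -G z) atBot (𝓝 (4 / π)) := by
    apply h.congr; intro z; simp [G_neg]
  simpa using h2.neg

lemma w_even (z : ℝ) : w (-z) = w z := by
  simp [w, mul_neg, neg_div, Real.cosh_neg]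

lemma integrable_w_sq : Integrable (fun z => w z ^ 2) := by
  have hIoi : IntegrableOn (fun z => w z ^ 2) (Set.Ioi 0) volume := by
    apply integrableOn_Ioi_deriv_of_nonneg' (g := G)
    · exact fun x _ => hasDerivAt_G x
    · exact fun x _ => sq_nonneg _
    · exact tendsto_G_atTop
  rw [← integrableOn_univ, ← Set.Iio_union_Ici (a := (0:ℝ)), integrableOn_union,
    integrableOn_Ici_iff_integrableOn_Ioi]
  refine ⟨?_, hIoi⟩
  rw [← (Measure.measurePreserving_neg (volume : Measure ℝ)).integrableOn_comp_preimage
      (Homeomorph.neg ℝ).measurableEmbedding]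
  simp only [Function.comp_def]
  have hset : (Neg.neg ⁻¹' Set.Iio (0:ℝ)) = Set.Ioi 0 := by ext x; simp
  rw [hset]
  exact hIoi.congr_fun (fun x _ => by rw [w_even]) measurableSet_Ioi

lemma integral_w_sq : ∫ z, w z ^ 2 = 8 / π := by
  have := integral_of_hasDerivAt_of_tendsto (fun z => hasDerivAt_G z)
    integrable_w_sq tendsto_G_atBot tendsto_G_atTop
  rw [this]; ring

lemma continuous_w : Continuous w := by
  apply continuous_const.div
  · exact Real.continuous_cosh.comp (by continuity)
  · exact fun z => (Real.cosh_pos _).ne'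

lemma continuous_deriv_w : Continuous (deriv w) := by
  have : deriv w = fun z => -(π / 4 * Real.tanh (π * z / 4)) * w z := funext deriv_w
  rw [this]
  apply Continuous.mul _ continuous_w
  apply Continuous.neg
  apply continuous_const.mul
  have ht : (fun z : ℝ => Real.tanh (π * z / 4))
      = fun z => Real.sinh (π * z / 4) / Real.cosh (π * z / 4) :=
    funext fun z => Real.tanh_eq_sinh_div_cosh _
  rw [ht]
  exact (Real.continuous_sinh.comp (by continuity)).div
    (Real.continuous_cosh.comp (by continuity)) fun z => (Real.cosh_pos _).ne'

lemma memℒp_w : MemLp w 2 volume :=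
  (memLp_two_iff_integrable_sq continuous_w.aestronglyMeasurable).2 integrable_w_sq

lemma memℒp_deriv_w : MemLp (deriv w) 2 volume := by
  apply (memLp_two_iff_integrable_sq continuous_deriv_w.aestronglyMeasurable).2
  apply Integrable.mono' (integrable_w_sq.const_mul ((π / 4) ^ 2))
  · exact (continuous_deriv_w.pow 2).aestronglyMeasurable
  · refine Filter.Eventually.of_forall fun z => ?_
    rw [Real.norm_eq_abs, abs_of_nonneg (sq_nonneg _)]
    calc deriv w z ^ 2 = |deriv w z| ^ 2 := (sq_abs _).symm
      _ ≤ (π / 4 * w z) ^ 2 := by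
          apply pow_le_pow_left₀ (abs_nonneg _) (abs_deriv_w_le z)
      _ = (π / 4) ^ 2 * w z ^ 2 := by ring

lemma L2mul {f g : ℝ → ℂ} (hf : MemLp f 2 volume) (hg : MemLp g 2 volume) :
    Integrable (fun z => f z * g z) volume := by
  rw [← memLp_one_iff_integrable]
  have hpqr : (1 : ℝ≥0∞) / 1 = 1 / 2 + 1 / 2 := by
    rw [ENNReal.div_add_div_same, one_div_one]
    norm_num
    rw [ENNReal.div_self (by norm_num) (by norm_num)]
  exact hg.smul hf (r := 1)

/-- The range of the operator `D₀h = h' + (π/4)tanh(πz/4)h + (π/4)w⟨w',h⟩` on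
`H¹(ℝ)` is `L²`-orthogonal to `w`: `⟨w, D₀h⟩ = 0` for every `h ∈ H¹(ℝ)`. -/
theorem range_orthogonal_to_w (h : ℝ → ℂ)
    (hdiff : ∀ z : ℝ, DifferentiableAt ℝ h z)
    (h2 : MemLp h 2 volume) (h'2 : MemLp (deriv h) 2 volume) :
    (∫ z : ℝ, (w z : ℂ) * (deriv h z
        + ((π / 4 * Real.tanh (π * z / 4) : ℝ) : ℂ) * h z
        + ((π / 4 * w z : ℝ) : ℂ) * ∫ s : ℝ, ((deriv w s : ℝ) : ℂ) * h s)) = 0 := by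
  set C : ℂ := ∫ s : ℝ, ((deriv w s : ℝ) : ℂ) * h s with hC
  -- integrability facts
  have hwh' : Integrable (fun z => (w z : ℂ) * deriv h z) volume := L2mul memℒp_w.ofReal h'2
  have hw'h : Integrable (fun z => ((deriv w z : ℝ) : ℂ) * h z) volume :=
    L2mul memℒp_deriv_w.ofReal h2
  have hwh : Integrable (fun z => (w z : ℂ) * h z) volume := L2mul memℒp_w.ofReal h2
  have hw2 : Integrable (fun z => ((w z ^ 2 : ℝ) : ℂ)) volume := integrable_w_sq.ofReal
  have hf3 : Integrable (fun z => (π / 4 : ℂ) * ((w z ^ 2 : ℝ) : ℂ) * C) volume :=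
    (hw2.const_mul _).mul_const _
  -- integration by parts: ∫ (w h)' = 0
  have hprod : ∀ z : ℝ, HasDerivAt (fun z => (w z : ℂ) * h z)
      (((deriv w z : ℝ) : ℂ) * h z + (w z : ℂ) * deriv h z) z := by
    intro z
    have hwz : HasDerivAt w (deriv w z) z := by
      rw [deriv_w]; exact hasDerivAt_w z
    exact hwz.ofReal_comp.mul (hdiff z).hasDerivAt
  have hibp : (∫ z : ℝ, (((deriv w z : ℝ) : ℂ) * h z + (w z : ℂ) * deriv h z)) = 0 :=
    integral_eq_zero_of_hasDerivAt_of_integrable hprod (hw'h.add hwh') hwh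
  rw [integral_add hw'h hwh'] at hibp
  have hI1 : (∫ z : ℝ, (w z : ℂ) * deriv h z) = -C := by
    rw [← hC] at hibp
    linear_combination hibp
  have hpiC : (π : ℂ) ≠ 0 := by exact_mod_cast Real.pi_ne_zero
  have hIf3 : (∫ z : ℝ, (π / 4 : ℂ) * ((w z ^ 2 : ℝ) : ℂ) * C) = 2 * C := by
    have hio : (∫ a : ℝ, ((w a ^ 2 : ℝ) : ℂ)) = ((∫ a : ℝ, w a ^ 2 : ℝ) : ℂ) :=
      integral_ofReal
    rw [integral_mul_const, integral_const_mul, hio, integral_w_sq]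
    push_cast
    field_simp
    ring
  have hint : (fun z : ℝ => (w z : ℂ) * (deriv h z
        + ((π / 4 * Real.tanh (π * z / 4) : ℝ) : ℂ) * h z
        + ((π / 4 * w z : ℝ) : ℂ) * C))
      = fun z => (w z : ℂ) * deriv h z + (-(((deriv w z : ℝ) : ℂ) * h z))
          + (π / 4 : ℂ) * ((w z ^ 2 : ℝ) : ℂ) * C := by
    funext z
    rw [deriv_w]
    push_cast
    ring
  have hneg : Integrable (fun z : ℝ => -(((deriv w z : ℝ) : ℂ) * h z)) volume := hw'h.neg
  have h12 : Integrable
      (fun z : ℝ => (w z : ℂ) * deriv h z + -(((deriv w z : ℝ) : ℂ) * h z)) volume :=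
    hwh'.add hneg
  rw [hint, integral_add h12 hf3, integral_add hwh' hneg, integral_neg, hI1, ← hC, hIf3]
  ring
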